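/- arXiv:1408.1045 — 2 statements merged into one kernel-verified Lean document; each statement's English description precedes it below -/
import Mathlib

section
/- Two nearest-neighbour discrete loops γ and γ' on ℤ² visit a common vertex if and only if their linear interpolations Φ_N γ and Φ_N γ' (for any fixed N ≥ 1) have intersecting images in ℂ. -/
noncomputable def PhiN (N : ℕ) (z : ℕ → ℂ) (t : ℝ) : ℂ :=
  (((1 : ℝ) - (2 * (N : ℝ) ^ 2 * t - ⌊2 * (N : ℝ) ^ 2 * t⌋₊) : ℝ) •
      z ⌊2 * (N : ℝ) ^ 2 * t⌋₊ +
    ((2 * (N : ℝ) ^ 2 * t - ⌊2 * (N : ℝ) ^ 2 * t⌋₊ : ℝ) • z (⌊2 * (N : ℝ) ^ 2 * t⌋₊ + 1))) / N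

lemma unitvec (e1 e2 : ℤ) (h : e1^2 + e2^2 = 1) :
    (e1 = 1 ∧ e2 = 0) ∨ (e1 = -1 ∧ e2 = 0) ∨ (e1 = 0 ∧ e2 = 1) ∨ (e1 = 0 ∧ e2 = -1) := by
  have h1 : -1 ≤ e1 ∧ e1 ≤ 1 := by
    constructor <;> nlinarith [sq_nonneg e2, sq_nonneg (e1+1), sq_nonneg (e1-1)]
  have h2 : -1 ≤ e2 ∧ e2 ≤ 1 := by
    constructor <;> nlinarith [sq_nonneg e1, sq_nonneg (e2+1), sq_nonneg (e2-1)]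
  obtain ⟨a,b⟩ := h1; obtain ⟨c,d⟩ := h2
  interval_cases e1 <;> interval_cases e2 <;> simp_all

lemma key (f g : ℝ) (hf0 : 0 ≤ f) (hf1 : f < 1) (hg0 : 0 ≤ g) (hg1 : g < 1)
    (a1 a2 c1 c2 e1 e2 e1' e2' : ℤ)
    (he : e1^2 + e2^2 = 1) (he' : e1'^2 + e2'^2 = 1)
    (h1 : (a1:ℝ) + f * e1 = c1 + g * e1')
    (h2 : (a2:ℝ) + f * e2 = c2 + g * e2') :
    (c1 = a1 ∧ c2 = a2) ∨ (c1 = a1 + e1 ∧ c2 = a2 + e2) := by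
  rcases unitvec e1 e2 he with ⟨rfl,rfl⟩|⟨rfl,rfl⟩|⟨rfl,rfl⟩|⟨rfl,rfl⟩ <;>
  rcases unitvec e1' e2' he' with ⟨rfl,rfl⟩|⟨rfl,rfl⟩|⟨rfl,rfl⟩|⟨rfl,rfl⟩ <;>
  push_cast at h1 h2 <;>
  (have d1 : c1 = a1 - 1 ∨ c1 = a1 ∨ c1 = a1 + 1 := by
    have l : (a1:ℝ) - 2 < c1 := by linarith
    have r : (c1:ℝ) < a1 + 2 := by linarith
    have l' : a1 - 2 < c1 := by exact_mod_cast l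
    have r' : c1 < a1 + 2 := by exact_mod_cast r
    omega) <;>
  (have d2 : c2 = a2 - 1 ∨ c2 = a2 ∨ c2 = a2 + 1 := by
    have l : (a2:ℝ) - 2 < c2 := by linarith
    have r : (c2:ℝ) < a2 + 2 := by linarith
    have l' : a2 - 2 < c2 := by exact_mod_cast l
    have r' : c2 < a2 + 2 := by exact_mod_cast r
    omega) <;>
  rcases d1 with h|h|h <;> rcases d2 with h'|h'|h' <;>
  first
    | (left; omega)
    | (right; omega)
    | (exfalso; subst h; subst h'; push_cast at h1 h2; linarith)

lemma per_mod {z : ℕ → ℂ} {n : ℕ} (hn : 0 < n) (h : ∀ j, z (j + n) = z j) (p : ℕ) :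
    z p = z (p % n) := by
  induction p using Nat.strong_induction_on with
  | _ p ih =>
    rcases lt_or_ge p n with hp | hp
    · rw [Nat.mod_eq_of_lt hp]
    · have h1 := h (p - n)
      rw [Nat.sub_add_cancel hp] at h1
      rw [h1, ih (p - n) (by omega), Nat.mod_eq_sub_mod hp]

lemma PhiN_cast (N : ℕ) (hN : 1 ≤ N) (z : ℕ → ℂ) (j : ℕ) :
    PhiN N z ((j : ℝ) / (2 * (N:ℝ)^2)) = z j / N := by
  have hN0 : (N:ℝ) ≠ 0 := by positivity
  have ht : 2 * (N:ℝ)^2 * ((j : ℝ) / (2 * (N:ℝ)^2)) = (j:ℝ) := by field_simp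
  rw [PhiN, ht, Nat.floor_natCast]
  simp

lemma step_sq (z : ℕ → ℂ) (j : ℕ) (a1 a2 b1 b2 : ℤ)
    (hA : z j = (a1:ℂ) + (a2:ℂ) * Complex.I) (hB : z (j+1) = (b1:ℂ) + (b2:ℂ) * Complex.I)
    (hstep : ‖z (j + 1) - z j‖ = 1) :
    (b1 - a1)^2 + (b2 - a2)^2 = 1 := by
  have h := congrArg (· ^ 2) hstep
  simp only [Complex.sq_norm, one_pow] at h
  rw [hA, hB] at h
  have : ((b1 - a1 : ℤ) : ℝ)^2 + ((b2 - a2 : ℤ):ℝ)^2 = 1 := by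
    simp [Complex.normSq_apply] at h
    push_cast
    nlinarith [h]
  exact_mod_cast this

lemma extract_re_im (f g : ℝ) (a1 a2 b1 b2 c1 c2 d1 d2 : ℤ)
    (heq : (1-f) • ((a1:ℂ) + (a2:ℂ) * Complex.I) + f • ((b1:ℂ) + (b2:ℂ) * Complex.I)
         = (1-g) • ((c1:ℂ) + (c2:ℂ) * Complex.I) + g • ((d1:ℂ) + (d2:ℂ) * Complex.I)) :
    (a1:ℝ) + f * ((b1 - a1 : ℤ) : ℝ) = c1 + g * ((d1 - c1 : ℤ):ℝ) ∧
    (a2:ℝ) + f * ((b2 - a2 : ℤ) : ℝ) = c2 + g * ((d2 - c2 : ℤ):ℝ) := by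
  simp only [Complex.real_smul, Complex.ext_iff, Complex.add_re, Complex.add_im,
    Complex.mul_re, Complex.mul_im, Complex.I_re, Complex.I_im, Complex.intCast_re,
    Complex.intCast_im, Complex.ofReal_re, Complex.ofReal_im] at heq
  obtain ⟨h1, h2⟩ := heq
  constructor <;> push_cast <;> ring_nf at h1 h2 ⊢ <;> linarith

/-- Two nearest-neighbour discrete loops on `ℤ²` visit a common vertex if and only if their
linear interpolations `Φ_N` have intersecting images. -/
theorem stmt6 (N : ℕ) (hN : 1 ≤ N) (n m : ℕ) (hn : 2 ≤ n) (hm : 2 ≤ m)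
    (z z' : ℕ → ℂ)
    (hlat : ∀ j, ∃ a b : ℤ, z j = (a : ℂ) + (b : ℂ) * Complex.I)
    (hlat' : ∀ j, ∃ a b : ℤ, z' j = (a : ℂ) + (b : ℂ) * Complex.I)
    (hstep : ∀ j, ‖z (j + 1) - z j‖ = 1)
    (hstep' : ∀ j, ‖z' (j + 1) - z' j‖ = 1)
    (hper : ∀ j, z (j + n) = z j) (hper' : ∀ j, z' (j + m) = z' j) :
    (∃ j < n, ∃ k < m, z j = z' k) ↔
      ∃ s ∈ Set.Icc (0 : ℝ) ((n : ℝ) / (2 * (N : ℝ) ^ 2)),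
        ∃ u ∈ Set.Icc (0 : ℝ) ((m : ℝ) / (2 * (N : ℝ) ^ 2)),
          PhiN N z s = PhiN N z' u := by
  have hNR : (0:ℝ) < (N:ℝ) := by exact_mod_cast hN
  constructor
  · rintro ⟨j, hj, k, hk, hzz⟩
    refine ⟨(j:ℝ) / (2 * (N:ℝ)^2), ⟨by positivity, ?_⟩,
            (k:ℝ) / (2 * (N:ℝ)^2), ⟨by positivity, ?_⟩, ?_⟩
    · gcongr
    · gcongr
    · rw [PhiN_cast N hN, PhiN_cast N hN, hzz]
  · rintro ⟨s, ⟨hs0, _⟩, u, ⟨hu0, _⟩, heq⟩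
    have hN0 : (N:ℂ) ≠ 0 := by
      simp only [ne_eq, Nat.cast_eq_zero]; omega
    set j := ⌊2 * (N:ℝ)^2 * s⌋₊ with hjdef
    set k := ⌊2 * (N:ℝ)^2 * u⌋₊ with hkdef
    set f := 2 * (N:ℝ)^2 * s - (j:ℝ) with hfdef
    set g := 2 * (N:ℝ)^2 * u - (k:ℝ) with hgdef
    have hs' : (0:ℝ) ≤ 2 * (N:ℝ)^2 * s := by positivity
    have hu' : (0:ℝ) ≤ 2 * (N:ℝ)^2 * u := by positivity
    have hf0 : 0 ≤ f := by
      have := Nat.floor_le hs'; rw [hfdef]; linarith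
    have hf1 : f < 1 := by
      have := Nat.lt_floor_add_one (2 * (N:ℝ)^2 * s); rw [hfdef]; linarith
    have hg0 : 0 ≤ g := by
      have := Nat.floor_le hu'; rw [hgdef]; linarith
    have hg1 : g < 1 := by
      have := Nat.lt_floor_add_one (2 * (N:ℝ)^2 * u); rw [hgdef]; linarith
    rw [PhiN, PhiN, div_eq_div_iff hN0 hN0] at heq
    have heq2 : (1 - f) • z j + f • z (j+1) = (1 - g) • z' k + g • z' (k+1) :=
      mul_right_cancel₀ hN0 heq
    obtain ⟨a1, a2, hA⟩ := hlat j
    obtain ⟨b1, b2, hB⟩ := hlat (j+1)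
    obtain ⟨c1, c2, hC⟩ := hlat' k
    obtain ⟨d1, d2, hD⟩ := hlat' (k+1)
    rw [hA, hB, hC, hD] at heq2
    obtain ⟨h1, h2⟩ := extract_re_im f g a1 a2 b1 b2 c1 c2 d1 d2 heq2
    have he := step_sq z j a1 a2 b1 b2 hA hB (hstep j)
    have he' := step_sq z' k c1 c2 d1 d2 hC hD (hstep' k)
    have hk' := key f g hf0 hf1 hg0 hg1 a1 a2 c1 c2 _ _ _ _ he he' h1 h2
    have hmain : ∃ p, z p = z' k := by
      rcases hk' with ⟨e1, e2⟩ | ⟨e1, e2⟩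
      · exact ⟨j, by rw [hA, hC, e1, e2]⟩
      · exact ⟨j + 1, by rw [hB, hC]; rw [show c1 = b1 by omega, show c2 = b2 by omega]⟩
    obtain ⟨p, hp⟩ := hmain
    refine ⟨p % n, Nat.mod_lt _ (by omega), k % m, Nat.mod_lt _ (by omega), ?_⟩
    rw [← per_mod (by omega) hper p, ← per_mod (by omega) hper' k, hp]
end

section
/- A closed continuous loop in ℂ whose winding number around a point w is nonzero separates w from infinity: every continuous path from w to points of arbitrarily large modulus must intersect the image of the loop. -/
open Complex Set Finset

private lemma aux_arg_div {r s : ℝ} (hr : 0 < r) (hs : 0 < s) {a b : ℝ}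
    (hab : b - a ∈ Set.Ioc (-Real.pi) Real.pi) :
    Complex.arg (((s : ℂ) * Complex.exp ((b:ℂ) * Complex.I)) /
      ((r : ℂ) * Complex.exp ((a:ℂ) * Complex.I))) = b - a := by
  have key : ((s : ℂ) * Complex.exp ((b:ℂ) * Complex.I)) /
      ((r : ℂ) * Complex.exp ((a:ℂ) * Complex.I))
      = ((s / r : ℝ) : ℂ) * Complex.exp (((b - a : ℝ) : ℂ) * Complex.I) := by
    have hr' : (r : ℂ) ≠ 0 := by exact_mod_cast hr.ne'
    push_cast
    rw [sub_mul, Complex.exp_sub]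
    field_simp [Complex.exp_ne_zero]
  rw [key, Complex.arg_real_mul _ (div_pos hs hr), Complex.exp_mul_I]
  exact_mod_cast Complex.arg_cos_add_sin_mul_I hab

private lemma aux_arg_div' {z w : ℂ} (hz : z ≠ 0) (hw : w ≠ 0) {a b : ℝ}
    (ha : z = (‖z‖ : ℂ) * Complex.exp ((a:ℂ) * Complex.I))
    (hb : w = (‖w‖ : ℂ) * Complex.exp ((b:ℂ) * Complex.I))
    (hab : b - a ∈ Set.Ioc (-Real.pi) Real.pi) :
    Complex.arg (w / z) = b - a := by
  rw [show w / z = ((‖w‖ : ℂ) * Complex.exp ((b:ℂ) * Complex.I)) /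
      ((‖z‖ : ℂ) * Complex.exp ((a:ℂ) * Complex.I)) from by rw [← ha, ← hb]]
  exact aux_arg_div (norm_pos_iff.mpr hz) (norm_pos_iff.mpr hw) hab

private lemma aux_prod_div (f : ℕ → ℂ) (n : ℕ) (hf : ∀ k, k ≤ n → f k ≠ 0) :
    ∏ k ∈ Finset.range n, (f (k+1) / f k) = f n / f 0 := by
  induction n with
  | zero => simp [div_self (hf 0 le_rfl)]
  | succ n ih =>
    rw [Finset.prod_range_succ, ih (fun k hk => hf k (hk.trans n.le_succ))]
    have h0 := hf 0 (Nat.zero_le _)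
    have hn := hf n n.le_succ
    field_simp

private lemma aux_halfplane {F c : ℂ} (h : ‖F - c‖ < ‖c‖) (hF : F ≠ 0) :
    0 < (F * (starRingEnd ℂ) c).re := by
  have h2 : Complex.normSq (F - c) < Complex.normSq c := by
    rw [← Complex.sq_norm, ← Complex.sq_norm]
    exact pow_lt_pow_left₀ h (norm_nonneg _) two_ne_zero
  have hF2 : 0 < Complex.normSq F := Complex.normSq_pos.2 hF
  simp only [Complex.normSq_apply, Complex.sub_re, Complex.sub_im, Complex.mul_re,
    Complex.conj_re, Complex.conj_im] at *
  nlinarith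

private lemma aux_re_pos_of_near_one {q : ℂ} (h : ‖q - 1‖ < 1) : 0 < q.re := by
  have h2 : |q.re - 1| < 1 := by
    have : |(q - 1).re| ≤ ‖q - 1‖ := Complex.abs_re_le_norm _
    simpa using this.trans_lt h
  have := abs_lt.1 h2
  linarith [this.1]

private lemma aux_exp_arg (z : ℂ) (hz : z ≠ 0) :
    Complex.exp ((Complex.arg z : ℂ) * Complex.I) = z / (‖z‖ : ℂ) := by
  have : (‖z‖ : ℂ) ≠ 0 := by
    exact_mod_cast (norm_pos_iff.mpr hz).ne'
  rw [eq_div_iff this, mul_comm]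
  exact Complex.norm_mul_exp_arg_mul_I z

/-- A closed continuous loop with nonzero winding number around `w` (expressed via a continuous
lift `θ` of the argument of `γ - w` with `θ 1 ≠ θ 0`) separates `w` from infinity: any
continuous path starting at `w` and ending at a point of modulus larger than that of every
point of the loop must meet the image of the loop. -/
theorem stmt19 (γ : ℝ → ℂ) (w : ℂ)
    (hγ : ContinuousOn γ (Set.Icc 0 1)) (hloop : γ 0 = γ 1)
    (hw : ∀ s ∈ Set.Icc (0 : ℝ) 1, γ s ≠ w)
    (θ : ℝ → ℝ) (hθ : ContinuousOn θ (Set.Icc 0 1))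
    (hlift : ∀ s ∈ Set.Icc (0 : ℝ) 1,
      γ s - w = (‖γ s - w‖ : ℂ) * Complex.exp ((θ s : ℂ) * Complex.I))
    (hwind : θ 1 ≠ θ 0)
    (η : ℝ → ℂ) (hη : ContinuousOn η (Set.Icc 0 1)) (hη0 : η 0 = w)
    (hη1 : ∀ s ∈ Set.Icc (0 : ℝ) 1, ‖γ s‖ < ‖η 1‖) :
    ∃ s ∈ Set.Icc (0 : ℝ) 1, ∃ u ∈ Set.Icc (0 : ℝ) 1, η s = γ u := by
  by_contra hcon
  push_neg at hcon
  have hne : ∀ u ∈ Set.Icc (0:ℝ) 1, ∀ s ∈ Set.Icc (0:ℝ) 1, γ u - η s ≠ 0 :=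
    fun u hu s hs => sub_ne_zero.2 fun h => hcon s hs u hu h.symm
  -- the compact square and the nonvanishing difference map
  set K : Set (ℝ × ℝ) := Set.Icc 0 1 ×ˢ Set.Icc 0 1 with hK
  set F : ℝ × ℝ → ℂ := fun p => γ p.1 - η p.2 with hF
  have hKc : IsCompact K := isCompact_Icc.prod isCompact_Icc
  have hKne : K.Nonempty := ⟨(0,0), ⟨⟨le_rfl, zero_le_one⟩, ⟨le_rfl, zero_le_one⟩⟩⟩
  have hFc : ContinuousOn F K := by
    exact (hγ.comp continuous_fst.continuousOn fun p hp => hp.1).sub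
      (hη.comp continuous_snd.continuousOn fun p hp => hp.2)
  have hFne : ∀ p ∈ K, F p ≠ 0 := fun p hp => hne p.1 hp.1 p.2 hp.2
  -- minimal modulus m > 0
  obtain ⟨p0, hp0, hmin⟩ := hKc.exists_isMinOn hKne
    (continuous_norm.comp_continuousOn hFc)
  set m : ℝ := ‖F p0‖ with hm
  have hmpos : 0 < m := norm_pos_iff.mpr (hFne p0 hp0)
  have hmle : ∀ p ∈ K, m ≤ ‖F p‖ := fun p hp => hmin hp
  -- uniform continuity of F and θ
  obtain ⟨δ1, hδ1, hUF⟩ := Metric.uniformContinuousOn_iff.1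
    (hKc.uniformContinuousOn_of_continuous hFc) m hmpos
  obtain ⟨δ2, hδ2, hUθ⟩ := Metric.uniformContinuousOn_iff.1
    (isCompact_Icc.uniformContinuousOn_of_continuous hθ) Real.pi Real.pi_pos
  -- choose the subdivision
  obtain ⟨n0, hn0⟩ := exists_nat_one_div_lt (lt_min hδ1 hδ2)
  set n : ℕ := n0 + 1 with hn
  have hnpos : (0:ℝ) < n := by positivity
  set t : ℕ → ℝ := fun k => (k : ℝ) / n with ht
  have ht0 : t 0 = 0 := by simp [ht]
  have htn : t n = 1 := by
    simp [ht, div_self hnpos.ne']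
  have htmem : ∀ k, k ≤ n → t k ∈ Set.Icc (0:ℝ) 1 := by
    intro k hk
    constructor
    · positivity
    · rw [div_le_one hnpos]
      exact_mod_cast hk
  have htdiff : ∀ k : ℕ, t (k+1) - t k = 1 / n := by
    intro k; simp only [ht]; push_cast; ring
  have htlt : (1:ℝ)/n < min δ1 δ2 := by
    simpa [hn] using hn0
  -- the γ-increments are small
  have hγsmall : ∀ k, k < n → ∀ s ∈ Set.Icc (0:ℝ) 1,
      ‖γ (t (k+1)) - γ (t k)‖ < m := by
    intro k hk s hs
    have h1 : ((t (k+1), s) : ℝ × ℝ) ∈ K := ⟨htmem _ hk, hs⟩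
    have h2 : ((t k, s) : ℝ × ℝ) ∈ K := ⟨htmem _ hk.le, hs⟩
    have hd : dist ((t (k+1), s) : ℝ × ℝ) ((t k, s)) < δ1 := by
      rw [Prod.dist_eq]
      simp only [dist_self]
      have h1n : dist (t (k+1)) (t k) < δ1 := by
        rw [Real.dist_eq, htdiff]
        calc |(1:ℝ)/n| = 1/n := abs_of_pos (by positivity)
          _ < min δ1 δ2 := htlt
          _ ≤ δ1 := min_le_left _ _
      exact max_lt h1n hδ1
    have := hUF _ h1 _ h2 hd
    rw [Complex.dist_eq] at this
    simpa [hF] using this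
  -- the θ-increments are small
  have hθsmall : ∀ k, k < n → |θ (t (k+1)) - θ (t k)| < Real.pi := by
    intro k hk
    have hd : dist (t (k+1)) (t k) < δ2 := by
      rw [Real.dist_eq, htdiff]
      calc |(1:ℝ)/n| = 1/n := abs_of_pos (by positivity)
        _ < min δ1 δ2 := htlt
        _ ≤ δ2 := min_le_right _ _
    have := hUθ _ (htmem _ hk) _ (htmem _ hk.le) hd
    rwa [Real.dist_eq] at this
  -- the discrete winding sum
  set W : ℝ → ℝ := fun s => ∑ k ∈ Finset.range n,
    Complex.arg ((γ (t (k+1)) - η s) / (γ (t k) - η s)) with hW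
  -- denominators are nonzero and quotients have positive real part
  have hden : ∀ k, k ≤ n → ∀ s ∈ Set.Icc (0:ℝ) 1, γ (t k) - η s ≠ 0 :=
    fun k hk s hs => hne _ (htmem k hk) s hs
  have hqre : ∀ k, k < n → ∀ s ∈ Set.Icc (0:ℝ) 1,
      0 < ((γ (t (k+1)) - η s) / (γ (t k) - η s)).re := by
    intro k hk s hs
    apply aux_re_pos_of_near_one
    have hd : γ (t k) - η s ≠ 0 := hden k hk.le s hs
    have habs : m ≤ ‖γ (t k) - η s‖ := hmle (t k, s) ⟨htmem k hk.le, hs⟩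
    have : (γ (t (k+1)) - η s) / (γ (t k) - η s) - 1
        = (γ (t (k+1)) - γ (t k)) / (γ (t k) - η s) := by
      field_simp
      ring
    rw [this, norm_div, div_lt_one (norm_pos_iff.mpr hd)]
    exact lt_of_lt_of_le (hγsmall k hk s hs) habs
  -- continuity of W
  have hWc : ContinuousOn W (Set.Icc 0 1) := by
    apply continuousOn_finset_sum
    intro k hk
    rw [Finset.mem_range] at hk
    have hq : ContinuousOn (fun s => (γ (t (k+1)) - η s) / (γ (t k) - η s)) (Set.Icc 0 1) :=
      (continuousOn_const.sub hη).div (continuousOn_const.sub hη)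
        fun s hs => hden k hk.le s hs
    intro s hs
    have harg : ContinuousAt Complex.arg ((γ (t (k+1)) - η s) / (γ (t k) - η s)) :=
      Complex.continuousAt_arg (Complex.mem_slitPlane_iff.mpr (Or.inl (hqre k hk s hs)))
    exact ContinuousAt.comp_continuousWithinAt (f := fun s => (γ (t (k+1)) - η s) / (γ (t k) - η s)) harg (hq s hs)
  -- exp (W s * I) = 1
  have hexp : ∀ s ∈ Set.Icc (0:ℝ) 1, Complex.exp ((W s : ℂ) * Complex.I) = 1 := by
    intro s hs
    have hcast : ((W s : ℂ)) * Complex.I = ∑ k ∈ Finset.range n,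
        ((Complex.arg ((γ (t (k+1)) - η s) / (γ (t k) - η s)) : ℂ) * Complex.I) := by
      rw [hW]; push_cast; rw [Finset.sum_mul]
    rw [hcast, Complex.exp_sum]
    have hterm : ∀ k ∈ Finset.range n,
        Complex.exp ((Complex.arg ((γ (t (k+1)) - η s) / (γ (t k) - η s)) : ℂ) * Complex.I)
        = ((γ (t (k+1)) - η s) / (γ (t k) - η s)) /
          ((‖(γ (t (k+1)) - η s) / (γ (t k) - η s)‖ : ℝ) : ℂ) := by
      intro k hk
      rw [Finset.mem_range] at hk
      exact aux_exp_arg _ (div_ne_zero (hden (k+1) hk s hs) (hden k hk.le s hs))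
    rw [Finset.prod_congr rfl hterm, Finset.prod_div_distrib]
    have hprodq : ∏ k ∈ Finset.range n, ((γ (t (k+1)) - η s) / (γ (t k) - η s)) = 1 := by
      rw [aux_prod_div (fun k => γ (t k) - η s) n (fun k hk => hden k hk s hs)]
      rw [htn, ht0, ← hloop]
      exact div_self (by rw [← ht0]; exact hden 0 (Nat.zero_le _) s hs)
    have hprodabs : ∏ k ∈ Finset.range n,
        ((‖(γ (t (k+1)) - η s) / (γ (t k) - η s)‖ : ℝ) : ℂ) = 1 := by
      have : ∏ k ∈ Finset.range n,
          ((‖(γ (t (k+1)) - η s) / (γ (t k) - η s)‖ : ℝ) : ℂ)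
          = ((∏ k ∈ Finset.range n,
              ‖(γ (t (k+1)) - η s) / (γ (t k) - η s)‖ : ℝ) : ℂ) := by
        push_cast; rfl
      rw [this, ← norm_prod, hprodq]
      simp
    rw [hprodq, hprodabs]
    simp
  have h0mem : (0:ℝ) ∈ Set.Icc (0:ℝ) 1 := ⟨le_rfl, zero_le_one⟩
  have h1mem : (1:ℝ) ∈ Set.Icc (0:ℝ) 1 := ⟨zero_le_one, le_rfl⟩
  -- W is constant on [0,1]
  have hWconst : ∀ s ∈ Set.Icc (0:ℝ) 1, W s = W 0 := by
    intro s hs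
    by_contra hne'
    have e0 := hexp 0 h0mem
    have es := hexp s hs
    have hdiff : ∃ k : ℤ, W s - W 0 = k * (2 * Real.pi) := by
      have hone : Complex.exp (((W s - W 0 : ℝ) : ℂ) * Complex.I) = 1 := by
        push_cast
        rw [sub_mul, Complex.exp_sub, es, e0]
        norm_num
      rw [Complex.exp_eq_one_iff] at hone
      obtain ⟨k, hk⟩ := hone
      refine ⟨k, ?_⟩
      have hk' : ((W s - W 0 : ℝ) : ℂ) * Complex.I = ((k : ℝ) * (2 * Real.pi) : ℝ) * Complex.I := by
        rw [hk]; push_cast; ring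
      have := mul_right_cancel₀ Complex.I_ne_zero hk'
      exact_mod_cast this
    obtain ⟨k, hk⟩ := hdiff
    have hk0 : k ≠ 0 := by
      intro h
      rw [h] at hk
      simp at hk
      exact hne' (by linarith)
    have habs : 2 * Real.pi ≤ |W s - W 0| := by
      rw [hk, abs_mul, abs_of_pos (by positivity : (0:ℝ) < 2 * Real.pi)]
      have h1 : (1:ℝ) ≤ |(k:ℝ)| := by exact_mod_cast Int.one_le_abs hk0
      nlinarith [Real.pi_pos]
    have h0s : (0:ℝ) ≤ s := hs.1
    have hmono : Set.Icc (0:ℝ) s ⊆ Set.Icc 0 1 := Set.Icc_subset_Icc le_rfl hs.2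
    have hWc' : ContinuousOn W (Set.Icc 0 s) := hWc.mono hmono
    have hkey : ∃ c, (∃ s' ∈ Set.Icc (0:ℝ) s, W s' = c) ∧
        Complex.exp ((c:ℂ) * Complex.I) = -1 := by
      rcases lt_or_gt_of_ne hne' with hlt | hlt
      · -- W s < W 0
        have hge : 2 * Real.pi ≤ W 0 - W s := by
          rw [abs_of_neg (by linarith)] at habs; linarith
        have hc : W 0 - Real.pi ∈ Set.Icc (W s) (W 0) :=
          ⟨by linarith [Real.pi_pos], by linarith [Real.pi_pos]⟩
        obtain ⟨s', hs', hWs'⟩ := intermediate_value_Icc' h0s hWc' hc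
        refine ⟨W 0 - Real.pi, ⟨s', hs', hWs'⟩, ?_⟩
        push_cast
        rw [sub_mul, Complex.exp_sub, e0, Complex.exp_pi_mul_I]
        norm_num
      · -- W 0 < W s
        have hge : 2 * Real.pi ≤ W s - W 0 := by
          rw [abs_of_pos (by linarith)] at habs; linarith
        have hc : W s - Real.pi ∈ Set.Icc (W 0) (W s) :=
          ⟨by linarith [Real.pi_pos], by linarith [Real.pi_pos]⟩
        obtain ⟨s', hs', hWs'⟩ := intermediate_value_Icc h0s hWc' hc
        refine ⟨W s - Real.pi, ⟨s', hs', hWs'⟩, ?_⟩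
        push_cast
        rw [sub_mul, Complex.exp_sub, es, Complex.exp_pi_mul_I]
        norm_num
    obtain ⟨c, ⟨s', hs', hWs'⟩, hcexp⟩ := hkey
    have := hexp s' (hmono hs')
    rw [hWs', hcexp] at this
    norm_num at this
  -- W 0 equals the total variation of the lifted argument
  have hW0 : W 0 = θ 1 - θ 0 := by
    have hterm : ∀ k ∈ Finset.range n,
        Complex.arg ((γ (t (k+1)) - η 0) / (γ (t k) - η 0)) = θ (t (k+1)) - θ (t k) := by
      intro k hk
      rw [Finset.mem_range] at hk
      rw [hη0]
      have hz : γ (t k) - w ≠ 0 := sub_ne_zero.2 (hw _ (htmem k hk.le))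
      have hwk : γ (t (k+1)) - w ≠ 0 := sub_ne_zero.2 (hw _ (htmem _ hk))
      apply aux_arg_div' hz hwk (hlift _ (htmem k hk.le)) (hlift _ (htmem _ hk))
      have hsm := hθsmall k hk
      rw [abs_lt] at hsm
      exact ⟨hsm.1, hsm.2.le⟩
    simp only [hW]
    rw [Finset.sum_congr rfl hterm, Finset.sum_range_sub (fun k => θ (t k)), htn, ht0]
  -- W 1 = 0 because the loop lies in a half-plane as seen from η 1
  have hW1 : W 1 = 0 := by
    have hc0 : 0 < ‖η 1‖ :=
      lt_of_le_of_lt (norm_nonneg _) (hη1 0 h0mem)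
    have hcne : -η 1 ≠ 0 := neg_ne_zero.2 (norm_pos_iff.1 hc0)
    have hconjne : (starRingEnd ℂ) (-η 1) ≠ 0 := by
      simpa using hcne
    set g : ℕ → ℂ := fun k => (γ (t k) - η 1) * (starRingEnd ℂ) (-η 1) with hg
    have hfne : ∀ k, k ≤ n → γ (t k) - η 1 ≠ 0 := by
      intro k hk h
      rw [sub_eq_zero] at h
      have := hη1 (t k) (htmem k hk)
      rw [h] at this
      exact lt_irrefl _ this
    have hgne : ∀ k, k ≤ n → g k ≠ 0 :=
      fun k hk => mul_ne_zero (hfne k hk) hconjne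
    have hgre : ∀ k, k ≤ n → 0 < (g k).re := by
      intro k hk
      apply aux_halfplane _ (hfne k hk)
      have habs' : ‖(γ (t k) - η 1) - (-η 1)‖ = ‖γ (t k)‖ := by
        congr 1; ring
      rw [habs', norm_neg]
      exact hη1 (t k) (htmem k hk)
    have hαlt : ∀ k, k ≤ n → |Complex.arg (g k)| < Real.pi / 2 :=
      fun k hk => Complex.abs_arg_lt_pi_div_two_iff.2 (Or.inl (hgre k hk))
    have hterm : ∀ k ∈ Finset.range n,
        Complex.arg ((γ (t (k+1)) - η 1) / (γ (t k) - η 1))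
          = Complex.arg (g (k+1)) - Complex.arg (g k) := by
      intro k hk
      rw [Finset.mem_range] at hk
      have hq : (γ (t (k+1)) - η 1) / (γ (t k) - η 1) = g (k+1) / g k := by
        rw [hg]
        rw [mul_div_mul_right _ _ hconjne]
      rw [hq]
      apply aux_arg_div' (hgne k hk.le) (hgne (k+1) hk)
        (Complex.norm_mul_exp_arg_mul_I (g k)).symm
        (Complex.norm_mul_exp_arg_mul_I (g (k+1))).symm
      have h1 := abs_lt.1 (hαlt k hk.le)
      have h2 := abs_lt.1 (hαlt (k+1) hk)
      constructor <;> [linarith; linarith]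
    simp only [hW]
    rw [Finset.sum_congr rfl hterm, Finset.sum_range_sub (fun k => Complex.arg (g k))]
    have hgeq : g n = g 0 := by
      rw [hg]
      simp only
      rw [htn, ht0, hloop]
    rw [hgeq, sub_self]
  have hfin := hWconst 1 h1mem
  rw [hW1, hW0] at hfin
  exact hwind (by linarith)
end
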